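/- Let t ≥ 4 and m ≥ 2 be integers, and let 1 ≤ s ≤ ⌊(t−1)/2⌋. Let μ^s be the partition whose β-set is ⋃_{j=1}^{s} { k·t + (t−2j) : 0 ≤ k ≤ m−1 }. Then μ^s is a (t, mt−1)-core partition with distinct parts, and its size equals −s²·(m²+2m)/2 + s·(m²t+mt−m)/2. -/

import Mathlib

/-- A partition: a finite weakly decreasing list of positive integers. -/
structure Partn where
  parts : List ℕ
  pos : ∀ p ∈ parts, 0 < p
  sorted : parts.Pairwise (· ≥ ·)

namespace Partn

/-- The size of a partition: the sum of its parts. -/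
def size (l : Partn) : ℕ := l.parts.sum

/-- The number of rows `k` (0-indexed) with `λ_k ≥ j` (the length of column `j`). -/
def colLen (l : Partn) (j : ℕ) : ℕ := (l.parts.filter (fun p => j ≤ p)).length

/-- The hook length of the box in row `i` (0-indexed) and column `j` (1-indexed):
`λ_i − j + #{k : λ_k ≥ j} − i + 1` (with 1-indexed rows). -/
def hook (l : Partn) (i j : ℕ) : ℕ :=
  (l.parts.getD i 0 - j) + (l.colLen j - (i + 1)) + 1

/-- A partition is a `t`-core if none of its hook lengths is divisible by `t`. -/
def IsCore (t : ℕ) (l : Partn) : Prop :=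
  ∀ i j : ℕ, i < l.parts.length → 1 ≤ j → j ≤ l.parts.getD i 0 → ¬ (t ∣ l.hook i j)

/-- A partition has distinct parts if its parts are strictly decreasing. -/
def DistinctParts (l : Partn) : Prop := l.parts.Pairwise (· > ·)

/-- The β-set of a partition: `{λ_i + ℓ − i : 1 ≤ i ≤ ℓ}` (1-indexed). -/
def betaSet (l : Partn) : Finset ℕ :=
  (Finset.range l.parts.length).image
    (fun i => l.parts.getD i 0 + (l.parts.length - 1 - i))

/-- `nFn t i l` is the number of elements of the β-set of `l` congruent to `i` mod `t`. -/
def nFn (t i : ℕ) (l : Partn) : ℕ :=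
  (l.betaSet.filter (fun x => x % t = i)).card

end Partn

/-- Prefix property: in a weakly decreasing list, the rows with entry `≥ j` are exactly
the first `colLen j` rows. -/
lemma sorted_filter_length_iff {j : ℕ} (hj : 1 ≤ j) :
    ∀ (L : List ℕ), L.Pairwise (· ≥ ·) → ∀ i, i < L.length →
      (i < (L.filter (fun p => j ≤ p)).length ↔ j ≤ L.getD i 0) := by
  intro L
  induction L with
  | nil => intro _ i hi; simp at hi
  | cons a tl ih =>
    intro hsort i hi
    have h1 : ∀ b ∈ tl, b ≤ a := fun b hb => List.rel_of_pairwise_cons hsort hb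
    have h2 : tl.Pairwise (· ≥ ·) := hsort.of_cons
    by_cases hja : j ≤ a
    · rw [List.filter_cons_of_pos (by simpa using hja)]
      cases i with
      | zero => simpa using hja
      | succ i' =>
        simp only [List.length_cons, Nat.succ_lt_succ_iff, List.getD_cons_succ]
        exact ih h2 i' (by simpa using hi)
    · have hnil : tl.filter (fun p => j ≤ p) = [] := by
        rw [List.filter_eq_nil_iff]
        intro b hb
        simp only [decide_eq_true_eq]
        exact fun hc => hja (hc.trans (h1 b hb))
      rw [List.filter_cons_of_neg (by simpa using hja), hnil]
      simp only [List.length_nil, Nat.not_lt_zero, false_iff]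
      cases i with
      | zero => simpa using hja
      | succ i' =>
        simp only [List.getD_cons_succ]
        intro hc
        have hmem : tl.getD i' 0 ∈ tl := by
          rw [List.getD_eq_getElem (l := tl) (d := 0) (by simpa using hi)]
          exact List.getElem_mem _
        exact hja (hc.trans (h1 _ hmem))

namespace Partn

lemma colLen_le_length (l : Partn) (j : ℕ) : l.colLen j ≤ l.parts.length :=
  List.length_filter_le _ _

lemma lt_colLen_iff (l : Partn) {j i : ℕ} (hj : 1 ≤ j) (hi : i < l.parts.length) :
    i < l.colLen j ↔ j ≤ l.parts.getD i 0 :=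
  sorted_filter_length_iff hj l.parts l.sorted i hi

lemma beta_mem (l : Partn) {i : ℕ} (hi : i < l.parts.length) :
    l.parts.getD i 0 + (l.parts.length - 1 - i) ∈ l.betaSet :=
  Finset.mem_image.2 ⟨i, Finset.mem_range.2 hi, rfl⟩

lemma comp_not_mem (l : Partn) {j : ℕ} (hj : 1 ≤ j) :
    (j - 1) + (l.parts.length - l.colLen j) ∉ l.betaSet := by
  intro hmem
  obtain ⟨i', hi', heq⟩ := Finset.mem_image.1 hmem
  rw [Finset.mem_range] at hi'
  have hcl := l.colLen_le_length j
  by_cases h : i' < l.colLen j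
  · have h2 := (l.lt_colLen_iff hj hi').1 h
    omega
  · have h2 : ¬ (j ≤ l.parts.getD i' 0) := fun hc => h ((l.lt_colLen_iff hj hi').2 hc)
    omega

lemma beta_eq_comp_add_hook (l : Partn) {i j : ℕ} (hi : i < l.parts.length) (hj : 1 ≤ j)
    (hle : j ≤ l.parts.getD i 0) :
    l.parts.getD i 0 + (l.parts.length - 1 - i) =
      ((j - 1) + (l.parts.length - l.colLen j)) + l.hook i j := by
  have h1 : i < l.colLen j := (l.lt_colLen_iff hj hi).2 hle
  have h2 := l.colLen_le_length j
  unfold hook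
  omega

lemma isCore_of_closed (l : Partn) (T : ℕ)
    (h : ∀ b ∈ l.betaSet, T ≤ b → b - T ∈ l.betaSet) : l.IsCore T := by
  intro i j hi hj hle hdvd
  obtain ⟨d, hd⟩ := hdvd
  have hbeta := l.beta_mem hi
  have hcomp := l.comp_not_mem (j := j) hj
  have heq := l.beta_eq_comp_add_hook hi hj hle
  set c := (j - 1) + (l.parts.length - l.colLen j) with hc
  have key : ∀ d b, b ∈ l.betaSet → b = c + T * d → c ∈ l.betaSet := by
    intro d
    induction d with
    | zero => intro b hb hbe; simpa [hbe] using hb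
    | succ d ihd =>
      intro b hb hbe
      have hb2 : b = c + T * d + T := by rw [hbe]; ring
      have hTb : T ≤ b := by omega
      exact ihd (b - T) (h b hb hTb) (by omega)
  exact hcomp (key d _ hbeta (by rw [heq, hd]))

lemma isCore_of_bounded (l : Partn) (T : ℕ) (h : ∀ b ∈ l.betaSet, b < T) : l.IsCore T := by
  intro i j hi hj hle hdvd
  obtain ⟨d, hd⟩ := hdvd
  have hhook : 1 ≤ l.hook i j := by unfold hook; omega
  have hbeta := l.beta_mem hi
  have heq := l.beta_eq_comp_add_hook hi hj hle
  have hb := h _ hbeta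
  rcases Nat.eq_zero_or_pos d with h0 | h0
  · rw [h0, Nat.mul_zero] at hd; omega
  · have : T ≤ T * d := Nat.le_mul_of_pos_right _ h0
    omega

end Partn

/-- The partition `μ^s` with β-set `⋃_(j=1)^s {kt + (t−2j) : 0 ≤ k ≤ m−1}` is a
`(t, mt−1)`-core partition with distinct parts of size
`−s²(m²+2m)/2 + s(m²t+mt−m)/2`. -/
theorem mu_s_t_mt_sub_one (t m s : ℕ) (ht : 4 ≤ t) (hm : 2 ≤ m)
    (hs1 : 1 ≤ s) (hs2 : s ≤ (t - 1) / 2) :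
    ∃ lam : Partn,
      lam.betaSet = (Finset.Icc 1 s).biUnion
        (fun j => (Finset.range m).image (fun k => k * t + (t - 2 * j))) ∧
      lam.IsCore t ∧ lam.IsCore (m * t - 1) ∧ lam.DistinctParts ∧
      (lam.size : ℚ) = -(s : ℚ) ^ 2 * ((m : ℚ) ^ 2 + 2 * m) / 2
        + (s : ℚ) * ((m : ℚ) ^ 2 * t + m * t - m) / 2 := by
  have hs0 : 0 < s := hs1
  have h2s : 2 * s ≤ t - 1 := by
    have := (Nat.le_div_iff_mul_le (by norm_num : 0 < 2)).1 hs2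
    omega
  have hts : s + 1 ≤ t - s := by omega
  have hst : s ≤ t := by omega
  set f : ℕ → ℕ := fun i => (m - i / s) * (t - s) - (i % s + 1) with hf
  -- decomposition facts
  have hdec : ∀ i, i < m * s → i / s < m ∧ i % s < s ∧ i = (i / s) * s + i % s := by
    intro i hi
    refine ⟨(Nat.div_lt_iff_lt_mul hs0).2 hi, Nat.mod_lt _ hs0, ?_⟩
    rw [Nat.mul_comm]
    exact (Nat.div_add_mod i s).symm
  -- lower bound on the blocks
  have hAblock : ∀ q, q < m → t - s ≤ (m - q) * (t - s) :=
    fun q hq => Nat.le_mul_of_pos_left _ (by omega)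
  -- strict monotonicity
  have hmono : ∀ i i', i < i' → i' < m * s → f i' < f i := by
    intro i i' hii hi'
    obtain ⟨hq', hr', hd'⟩ := hdec i' hi'
    obtain ⟨hq, hr, hd⟩ := hdec i (lt_trans hii hi')
    set q := i / s with hqd
    set r := i % s with hrd
    set q' := i' / s with hq'd
    set r' := i' % s with hr'd
    have hqq' : q ≤ q' := by
      by_contra hcon
      push_neg at hcon
      have h1 : (q' + 1) * s ≤ q * s := Nat.mul_le_mul_right s (by omega)
      have e1 : (q' + 1) * s = q' * s + s := by ring
      omega
    rcases eq_or_lt_of_le hqq' with heq | hlt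
    · have hrr' : r < r' := by
        rw [heq] at hd
        omega
      have hA := hAblock q hq
      rw [hf]
      simp only
      rw [← hqd, ← hrd, ← hq'd, ← hr'd, ← heq]
      omega
    · have h1 : (m - q' + 1) * (t - s) ≤ (m - q) * (t - s) :=
        Nat.mul_le_mul_right _ (by omega)
      have e1 : (m - q' + 1) * (t - s) = (m - q') * (t - s) + (t - s) := by ring
      rw [hf]
      simp only
      rw [← hqd, ← hrd, ← hq'd, ← hr'd]
      omega
  -- the parts list
  have hposf : ∀ i, i < m * s → 0 < f i := by
    intro i hi
    obtain ⟨hq, hr, hd⟩ := hdec i hi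
    have hA := hAblock _ hq
    rw [hf]; simp only
    omega
  have hlen : ((List.range (m * s)).map f).length = m * s := by simp
  have hsortgt : ((List.range (m * s)).map f).Pairwise (· > ·) := by
    rw [List.pairwise_iff_getElem]
    intro a b ha hb hab
    simp only [List.length_map, List.length_range] at ha hb
    simp only [List.getElem_map, List.getElem_range]
    exact hmono a b hab hb
  have hposL : ∀ p ∈ (List.range (m * s)).map f, 0 < p := by
    intro p hp
    obtain ⟨i, hi, rfl⟩ := List.mem_map.1 hp
    exact hposf i (by simpa using hi)
  set lam : Partn := ⟨(List.range (m * s)).map f, hposL,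
    hsortgt.imp (fun h => le_of_lt h)⟩ with hlam
  have hparts : lam.parts = (List.range (m * s)).map f := rfl
  have hlenL : lam.parts.length = m * s := by rw [hparts]; simp
  have hgetD : ∀ i, i < m * s → lam.parts.getD i 0 = f i := by
    intro i hi
    rw [hparts, List.getD_eq_getElem _ _ (by simpa using hi)]
    simp
  -- the value of the i-th beta number
  have harith : ∀ q r i : ℕ, q < m → r < s → i = q * s + r →
      (m - q) * (t - s) - (r + 1) + (m * s - 1 - i) =
        (m - 1 - q) * t + (t - 2 * (r + 1)) := by
    intro q r i hq hr hd
    have hA := hAblock q hq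
    have hAC : (m - q) * (t - s) + (m - q) * s = (m - q) * t := by
      rw [← Nat.mul_add, Nat.sub_add_cancel hst]
    have hC : s ≤ (m - q) * s := Nat.le_mul_of_pos_left _ (by omega)
    have hMS : (m - q) * s + q * s = m * s := by
      rw [← Nat.add_mul, Nat.sub_add_cancel (le_of_lt hq)]
    have h1 : (m - 1 - q) + 1 = m - q := by omega
    have hK : (m - q) * t = (m - 1 - q) * t + t := by
      calc (m - q) * t = ((m - 1 - q) + 1) * t := by rw [h1]
        _ = (m - 1 - q) * t + t := by ring
    omega
  have hbetaval : ∀ i, i < m * s →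
      f i + (m * s - 1 - i) = (m - 1 - i / s) * t + (t - 2 * (i % s + 1)) := by
    intro i hi
    obtain ⟨hq, hr, hd⟩ := hdec i hi
    simp only [hf]
    exact harith (i / s) (i % s) i hq hr hd
  -- beta set equality
  have hbeq : lam.betaSet = (Finset.Icc 1 s).biUnion
      (fun j => (Finset.range m).image (fun k => k * t + (t - 2 * j))) := by
    ext x
    simp only [Partn.betaSet, hlenL, Finset.mem_image, Finset.mem_range,
      Finset.mem_biUnion, Finset.mem_Icc]
    constructor
    · rintro ⟨i, hi, rfl⟩
      obtain ⟨hq, hr, hd⟩ := hdec i hi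
      have hklt : m - 1 - i / s < m :=
        lt_of_le_of_lt (Nat.sub_le (m - 1) (i / s)) (by omega)
      refine ⟨i % s + 1, ⟨by omega, by omega⟩, m - 1 - i / s, hklt, ?_⟩
      rw [hgetD i hi, hbetaval i hi]
    · rintro ⟨j, ⟨hj1, hj2⟩, k, hk, rfl⟩
      set i := (m - 1 - k) * s + (j - 1) with hidef
      have h1 : (m - 1 - k) * s ≤ (m - 1) * s := Nat.mul_le_mul_right _ (by omega)
      have h3 : (m - 1) + 1 = m := by omega
      have h2 : (m - 1) * s + s = m * s := by
        calc (m - 1) * s + s = ((m - 1) + 1) * s := by ring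
          _ = m * s := by rw [h3]
      have hi : i < m * s := by omega
      have hieq : i = s * (m - 1 - k) + (j - 1) := by rw [hidef]; ring
      have hdiv : i / s = m - 1 - k := by
        rw [hieq, Nat.mul_add_div hs0, Nat.div_eq_of_lt (by omega), Nat.add_zero]
      have hmod : i % s = j - 1 := by
        rw [hieq, Nat.mul_add_mod, Nat.mod_eq_of_lt (by omega)]
      refine ⟨i, hi, ?_⟩
      rw [hgetD i hi, hbetaval i hi, hdiv, hmod]
      have e1 : m - 1 - (m - 1 - k) = k := by omega
      have e2 : j - 1 + 1 = j := by omega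
      rw [e1, e2]
  -- closure property of the beta set under subtracting t
  have hcore1 : lam.IsCore t := by
    apply Partn.isCore_of_closed
    rw [hbeq]
    intro b hb hTb
    simp only [Finset.mem_biUnion, Finset.mem_Icc, Finset.mem_image,
      Finset.mem_range] at hb ⊢
    obtain ⟨j, ⟨hj1, hj2⟩, k, hk, rfl⟩ := hb
    have hj2t : 2 * j ≤ t - 1 := by omega
    have hk1 : 1 ≤ k := by
      by_contra hcon
      push_neg at hcon
      interval_cases k
      omega
    have h1 : (k - 1) + 1 = k := by omega
    have hkk : k * t = (k - 1) * t + t := by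
      calc k * t = ((k - 1) + 1) * t := by rw [h1]
        _ = (k - 1) * t + t := by ring
    exact ⟨j, ⟨hj1, hj2⟩, k - 1, by omega, by omega⟩
  -- boundedness of the beta set below m*t - 1
  have hcore2 : lam.IsCore (m * t - 1) := by
    apply Partn.isCore_of_bounded
    rw [hbeq]
    intro b hb
    simp only [Finset.mem_biUnion, Finset.mem_Icc, Finset.mem_image,
      Finset.mem_range] at hb
    obtain ⟨j, ⟨hj1, hj2⟩, k, hk, rfl⟩ := hb
    have h1 : k * t ≤ (m - 1) * t := Nat.mul_le_mul_right _ (by omega)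
    have h3 : (m - 1) + 1 = m := by omega
    have h2 : (m - 1) * t + t = m * t := by
      calc (m - 1) * t + t = ((m - 1) + 1) * t := by ring
        _ = m * t := by rw [h3]
    omega
  -- the size
  have hsizeN : lam.size = ∑ i ∈ Finset.range (m * s), f i := rfl
  have hsum1 : ∑ i ∈ Finset.range (m * s), f i =
      ∑ p ∈ Finset.range m ×ˢ Finset.range s, ((m - p.1) * (t - s) - (p.2 + 1)) := by
    refine Finset.sum_nbij' (fun i => (i / s, i % s)) (fun p => p.1 * s + p.2)
      ?_ ?_ ?_ ?_ ?_
    · intro a ha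
      rw [Finset.mem_range] at ha
      obtain ⟨hq, hr, _⟩ := hdec a ha
      simp [Finset.mem_product, hq, hr]
    · intro p hp
      rw [Finset.mem_product, Finset.mem_range, Finset.mem_range] at hp
      have h1 : p.1 * s ≤ (m - 1) * s := Nat.mul_le_mul_right _ (by omega)
      have h3 : (m - 1) + 1 = m := by omega
      have h2 : (m - 1) * s + s = m * s := by
        calc (m - 1) * s + s = ((m - 1) + 1) * s := by ring
          _ = m * s := by rw [h3]
      rw [Finset.mem_range]
      show p.1 * s + p.2 < m * s
      omega
    · intro a ha
      rw [Finset.mem_range] at ha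
      obtain ⟨_, _, hd⟩ := hdec a ha
      show a / s * s + a % s = a
      omega
    · intro p hp
      rw [Finset.mem_product, Finset.mem_range, Finset.mem_range] at hp
      have hieq : p.1 * s + p.2 = s * p.1 + p.2 := by ring
      have hdiv : (p.1 * s + p.2) / s = p.1 := by
        rw [hieq, Nat.mul_add_div hs0, Nat.div_eq_of_lt (by omega), Nat.add_zero]
      have hmod : (p.1 * s + p.2) % s = p.2 := by
        rw [hieq, Nat.mul_add_mod, Nat.mod_eq_of_lt (by omega)]
      show ((p.1 * s + p.2) / s, (p.1 * s + p.2) % s) = p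
      rw [hdiv, hmod]
    · intro a _
      rfl
  have gauss : ∀ n : ℕ, ∑ i ∈ Finset.range n, (i : ℚ) = n * (n - 1) / 2 := by
    intro n
    induction n with
    | zero => simp
    | succ k ihg => rw [Finset.sum_range_succ, ihg]; push_cast; ring
  have hsizeQ : (lam.size : ℚ) =
      ∑ q ∈ Finset.range m, ∑ r ∈ Finset.range s,
        (((m : ℚ) - q) * ((t : ℚ) - s) - ((r : ℚ) + 1)) := by
    rw [hsizeN, hsum1, Nat.cast_sum, Finset.sum_product]
    refine Finset.sum_congr rfl fun q hq => ?_
    refine Finset.sum_congr rfl fun r hr => ?_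
    rw [Finset.mem_range] at hq hr
    have hA := hAblock q hq
    have hle : r + 1 ≤ (m - q) * (t - s) := by omega
    show (((m - q) * (t - s) - (r + 1) : ℕ) : ℚ) = _
    rw [Nat.cast_sub hle, Nat.cast_mul, Nat.cast_sub hst, Nat.cast_sub (le_of_lt hq)]
    push_cast
    ring
  have hinner : ∀ q ∈ Finset.range m,
      ∑ r ∈ Finset.range s, (((m : ℚ) - q) * ((t : ℚ) - s) - ((r : ℚ) + 1)) =
        (s : ℚ) * (((m : ℚ) - q) * ((t : ℚ) - s)) - ((s : ℚ) * ((s : ℚ) - 1) / 2 + s) := by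
    intro q _
    rw [Finset.sum_sub_distrib, Finset.sum_const, Finset.card_range,
      Finset.sum_add_distrib, Finset.sum_const, Finset.card_range, gauss]
    simp only [nsmul_eq_mul]
    ring
  have houter : ∑ q ∈ Finset.range m, ((m : ℚ) - q) = (m : ℚ) * m - (m : ℚ) * ((m : ℚ) - 1) / 2 := by
    rw [Finset.sum_sub_distrib, Finset.sum_const, Finset.card_range, gauss, nsmul_eq_mul]
  have hsizeF : (lam.size : ℚ) = -(s : ℚ) ^ 2 * ((m : ℚ) ^ 2 + 2 * m) / 2
      + (s : ℚ) * ((m : ℚ) ^ 2 * t + m * t - m) / 2 := by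
    rw [hsizeQ, Finset.sum_congr rfl hinner, Finset.sum_sub_distrib, Finset.sum_const,
      Finset.card_range, nsmul_eq_mul]
    have e1 : ∑ q ∈ Finset.range m, (s : ℚ) * (((m : ℚ) - q) * ((t : ℚ) - s)) =
        (s : ℚ) * ((t : ℚ) - s) * ∑ q ∈ Finset.range m, ((m : ℚ) - q) := by
      rw [Finset.mul_sum]
      exact Finset.sum_congr rfl fun q _ => by ring
    rw [e1, houter]
    ring
  exact ⟨lam, hbeq, hcore1, hcore2, hsortgt, hsizeF⟩
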